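/- Let F be a field, A ∈ F^n⊗F^m a tensor, and let u_1⊗v_1,…,u_s⊗v_s ∈ F^n⊗F^m be linearly independent pure tensors. Define Â = A⊗e_{s+1} + Σ_{k=1}^s u_k⊗v_k⊗e_k ∈ F^n⊗F^m⊗F^{s+1}. Suppose Â = Σ_{j=1}^l a_j⊗b_j⊗c_j is any expression of Â as a sum of l pure tensors (a_j ∈ F^n, b_j ∈ F^m, c_j ∈ F^{s+1}). Then the vectors c_1,…,c_l together with e_{s+1} span the vector space F^{s+1}; in particular l ≥ s. -/

import Mathlib

open TensorProduct

set_option synthInstance.maxHeartbeats 400000 in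
set_option maxHeartbeats 1000000 in
/-- if `Â = A ⊗ e_{s+1} + ∑ₖ uₖ ⊗ vₖ ⊗ eₖ` with the `uₖ ⊗ vₖ` linearly
independent, then in any expression of `Â` as a sum of `l` pure tensors `aⱼ ⊗ bⱼ ⊗ cⱼ`,
the vectors `c₁, …, c_l` together with `e_{s+1}` span `F^{s+1}`; in particular `l ≥ s`. -/
theorem span_of_pure_decomposition {F : Type*} [Field F] {n m s : ℕ}
    (A : (Fin n → F) ⊗[F] (Fin m → F))
    (u : Fin s → Fin n → F) (v : Fin s → Fin m → F)
    (hli : LinearIndependent F fun k : Fin s => u k ⊗ₜ[F] v k)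
    (l : ℕ) (a : Fin l → Fin n → F) (b : Fin l → Fin m → F) (c : Fin l → Fin (s + 1) → F)
    (hdec :
      A ⊗ₜ[F] (Pi.single (Fin.last s) 1 : Fin (s + 1) → F)
          + ∑ k : Fin s, (u k ⊗ₜ[F] v k) ⊗ₜ[F]
              (Pi.single (Fin.castSucc k) 1 : Fin (s + 1) → F)
        = ∑ j : Fin l, (a j ⊗ₜ[F] b j) ⊗ₜ[F] c j) :
    Submodule.span F
        (insert (Pi.single (Fin.last s) 1 : Fin (s + 1) → F) (Set.range c)) = ⊤
      ∧ s ≤ l := by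
  classical
  have hspan : Submodule.span F
      (insert (Pi.single (Fin.last s) 1 : Fin (s + 1) → F) (Set.range c)) = ⊤ := by
    by_contra h
    obtain ⟨φ, hφne, hφ⟩ :=
      Submodule.exists_dual_map_eq_bot_of_lt_top (p := Submodule.span F
        (insert (Pi.single (Fin.last s) 1 : Fin (s + 1) → F) (Set.range c)))
        (lt_top_iff_ne_top.mpr h) inferInstance
    have hvanish : ∀ x ∈ (insert (Pi.single (Fin.last s) 1 : Fin (s + 1) → F)
        (Set.range c)), φ x = 0 := by
      intro x hx
      have hmem : φ x ∈ Submodule.map φ (Submodule.span F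
          (insert (Pi.single (Fin.last s) 1 : Fin (s + 1) → F) (Set.range c))) :=
        Submodule.mem_map_of_mem (Submodule.subset_span hx)
      rw [hφ] at hmem
      exact (Submodule.mem_bot (R := F)).mp hmem
    set ψ : ((Fin n → F) ⊗[F] (Fin m → F)) ⊗[F] (Fin (s + 1) → F) →ₗ[F]
        ((Fin n → F) ⊗[F] (Fin m → F)) :=
      (TensorProduct.rid F _).toLinearMap ∘ₗ (LinearMap.lTensor _ φ) with hψdef
    have hψ : ∀ (x : (Fin n → F) ⊗[F] (Fin m → F)) (y : Fin (s + 1) → F),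
        ψ (x ⊗ₜ[F] y) = φ y • x := by
      intro x y
      simp [hψdef]
    have heq := congrArg ψ hdec
    simp only [map_add, map_sum, hψ] at heq
    have hlast : φ (Pi.single (Fin.last s) 1 : Fin (s + 1) → F) = 0 :=
      hvanish _ (Set.mem_insert _ _)
    have hc : ∀ j, φ (c j) = 0 := fun j =>
      hvanish _ (Set.mem_insert_of_mem _ (Set.mem_range_self j))
    rw [hlast] at heq
    simp only [hc, zero_smul, Finset.sum_const_zero, add_zero] at heq
    rw [zero_add] at heq
    have hcoef : ∀ k : Fin s, φ (Pi.single (Fin.castSucc k) 1 : Fin (s + 1) → F) = 0 := by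
      have := Fintype.linearIndependent_iff.mp hli
        (fun k => φ (Pi.single (Fin.castSucc k) 1 : Fin (s + 1) → F)) heq
      exact this
    have hzero : φ = 0 := by
      apply (Pi.basisFun F (Fin (s + 1))).ext
      intro i
      refine Fin.lastCases ?_ ?_ i
      · simpa using hlast
      · intro k
        simpa using hcoef k
    exact hφne hzero
  refine ⟨hspan, ?_⟩
  have hle : Module.finrank F (Fin (s + 1) → F) ≤ Fintype.card (Fin (l + 1)) :=
    finrank_le_of_span_eq_top
      (v := Fin.cons (Pi.single (Fin.last s) 1 : Fin (s + 1) → F) c)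
      (by rw [Fin.range_cons]; exact hspan)
  simpa [Module.finrank_pi] using hle
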